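/- For a finite-dimensional real vector space V equipped with boundary/coboundary operators coming from a simplicial complex, Har_p(K) equals the orthogonal complement of B_p(K) ⊕ B^p(K) inside C_p(K); equivalently, C_p(K) decomposes orthogonally as B_p(K) ⊕ Har_p(K) ⊕ B^p(K) (the Hodge decomposition for simplicial complexes). -/

import Mathlib

open Matrix Finset

private lemma dot_eq_sum {n : ℕ} (x y : Fin n → ℝ) : ∑ i, x i * y i = x ⬝ᵥ y := rfl

/-- **Hodge decomposition for simplicial complexes.**  With boundary matrices
`D₁ = ∂_p`, `D₂ = ∂_{p+1}` satisfying `∂∂ = 0`, the harmonic space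
`Har_p(K) = ker ∂_p ∩ ker ∂_{p+1}ᵀ` equals the orthogonal complement of
`B_p(K) ⊕ B^p(K)` inside `C_p(K)`; equivalently `C_p(K)` decomposes orthogonally as
`B_p(K) ⊕ Har_p(K) ⊕ B^p(K)`, where `B_p = im ∂_{p+1}` and `B^p = im ∂_pᵀ`. -/
theorem hodge_decomposition {a b c : ℕ}
    (D₁ : Matrix (Fin a) (Fin b) ℝ) (D₂ : Matrix (Fin b) (Fin c) ℝ)
    (hdd : D₁ * D₂ = 0) :
    (∀ x : Fin b → ℝ,
      x ∈ LinearMap.ker D₁.mulVecLin ⊓ LinearMap.ker D₂.transpose.mulVecLin ↔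
        ∀ y ∈ LinearMap.range D₂.mulVecLin ⊔ LinearMap.range D₁.transpose.mulVecLin,
          ∑ i, x i * y i = 0) ∧
    (LinearMap.range D₂.mulVecLin ⊔
      (LinearMap.ker D₁.mulVecLin ⊓ LinearMap.ker D₂.transpose.mulVecLin) ⊔
      LinearMap.range D₁.transpose.mulVecLin = ⊤) ∧
    (∀ x ∈ LinearMap.range D₂.mulVecLin,
      ∀ y ∈ LinearMap.ker D₁.mulVecLin ⊓ LinearMap.ker D₂.transpose.mulVecLin,
        ∑ i, x i * y i = 0) ∧
    (∀ x ∈ LinearMap.range D₂.mulVecLin,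
      ∀ y ∈ LinearMap.range D₁.transpose.mulVecLin, ∑ i, x i * y i = 0) ∧
    (∀ x ∈ LinearMap.ker D₁.mulVecLin ⊓ LinearMap.ker D₂.transpose.mulVecLin,
      ∀ y ∈ LinearMap.range D₁.transpose.mulVecLin, ∑ i, x i * y i = 0) := by
  classical
  set H := LinearMap.ker D₁.mulVecLin ⊓ LinearMap.ker D₂.transpose.mulVecLin with hH
  set r₂ := LinearMap.range D₂.mulVecLin with hr₂
  set r₁ := LinearMap.range D₁.transpose.mulVecLin with hr₁
  have mem_H : ∀ x : Fin b → ℝ, x ∈ H ↔ D₁ *ᵥ x = 0 ∧ D₂ᵀ *ᵥ x = 0 := by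
    intro x
    exact Iff.rfl
  -- orthogonality lemmas
  have orth1 : ∀ x ∈ r₂, ∀ y ∈ H, ∑ i, x i * y i = 0 := by
    rintro x ⟨u, rfl⟩ y hy
    rw [dot_eq_sum]
    have h2 := ((mem_H y).1 hy).2
    rw [Matrix.mulVecLin_apply, dotProduct_comm, Matrix.dotProduct_mulVec,
      ← Matrix.mulVec_transpose, h2, zero_dotProduct]
  have orth2 : ∀ x ∈ r₂, ∀ y ∈ r₁, ∑ i, x i * y i = 0 := by
    rintro x ⟨u, rfl⟩ y ⟨v, rfl⟩
    rw [dot_eq_sum]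
    simp only [Matrix.mulVecLin_apply]
    rw [dotProduct_comm, Matrix.dotProduct_mulVec, Matrix.mulVec_transpose,
      Matrix.vecMul_vecMul, hdd, Matrix.vecMul_zero, zero_dotProduct]
  have orth3 : ∀ x ∈ H, ∀ y ∈ r₁, ∑ i, x i * y i = 0 := by
    rintro x hx y ⟨v, rfl⟩
    rw [dot_eq_sum]
    have h1 := ((mem_H x).1 hx).1
    rw [Matrix.mulVecLin_apply, Matrix.dotProduct_mulVec, Matrix.vecMul_transpose, h1,
      zero_dotProduct]
  have part1 : ∀ x : Fin b → ℝ, x ∈ H ↔ ∀ y ∈ r₂ ⊔ r₁, ∑ i, x i * y i = 0 := by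
    intro x
    constructor
    · intro hx y hy
      rcases Submodule.mem_sup.1 hy with ⟨y₁, hy₁, y₂, hy₂, rfl⟩
      have e1 := orth1 y₁ hy₁ x hx
      have e3 := orth3 x hx y₂ hy₂
      rw [dot_eq_sum] at e1 e3 ⊢
      rw [dotProduct_add, dotProduct_comm x y₁, e1, e3, add_zero]
    · intro h
      rw [mem_H]
      constructor
      · have := h (D₁ᵀ *ᵥ (D₁ *ᵥ x))
          (Submodule.mem_sup_right ⟨D₁ *ᵥ x, rfl⟩)
        rw [dot_eq_sum, Matrix.dotProduct_mulVec, Matrix.vecMul_transpose] at this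
        exact dotProduct_self_eq_zero.1 this
      · have := h (D₂ *ᵥ (D₂ᵀ *ᵥ x))
          (Submodule.mem_sup_left ⟨D₂ᵀ *ᵥ x, rfl⟩)
        rw [dot_eq_sum, Matrix.dotProduct_mulVec, ← Matrix.mulVec_transpose] at this
        exact dotProduct_self_eq_zero.1 this
  refine ⟨part1, ?_, orth1, orth2, orth3⟩
  -- the decomposition is all of C_p
  let e := (WithLp.linearEquiv 2 ℝ (Fin b → ℝ)).symm
  have heq : ∀ (v : Fin b → ℝ) (i : Fin b), e v i = v i := fun _ _ => rfl
  have heq' : ∀ (v : WithLp 2 (Fin b → ℝ)) (i : Fin b), e.symm v i = v i := fun _ _ => rfl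
  let K : Submodule ℝ (EuclideanSpace ℝ (Fin b)) := (r₂ ⊔ r₁).map e.toLinearMap
  have hKperp : Kᗮ = H.map e.toLinearMap := by
    ext x
    simp only [Submodule.mem_orthogonal, Submodule.mem_map]
    constructor
    · intro hx
      refine ⟨e.symm x, ?_, by simp⟩
      rw [part1]
      intro y hy
      have := hx (e y) ⟨y, hy, rfl⟩
      rw [PiLp.inner_apply] at this
      simp only [RCLike.inner_apply, conj_trivial] at this
      rw [← this]
      exact Finset.sum_congr rfl fun i _ => rfl
    · rintro ⟨z, hz, rfl⟩ y ⟨w, hw, rfl⟩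
      rw [PiLp.inner_apply]
      simp only [RCLike.inner_apply, conj_trivial]
      have h := (part1 z).1 hz w hw
      rw [← h]
      exact Finset.sum_congr rfl fun i _ => rfl
  have htop : K ⊔ Kᗮ = ⊤ := Submodule.sup_orthogonal_of_hasOrthogonalProjection
  rw [hKperp] at htop
  have hmap : ∀ p : Submodule ℝ (Fin b → ℝ),
      Submodule.map e.symm.toLinearMap (Submodule.map e.toLinearMap p) = p := by
    intro p
    rw [← Submodule.map_comp]
    simp
  have htop' : (r₂ ⊔ r₁) ⊔ H = ⊤ := by
    have h2 := congrArg (Submodule.map e.symm.toLinearMap) htop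
    rw [Submodule.map_sup, Submodule.map_top, LinearEquiv.range] at h2
    rw [← h2, hmap, hmap]
  calc r₂ ⊔ H ⊔ r₁ = (r₂ ⊔ r₁) ⊔ H := by
        rw [sup_assoc, sup_comm H r₁, ← sup_assoc]
    _ = ⊤ := htop'
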